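/- Let G ∈ 𝒢_{0,m2} (no loops, no restriction on the size of m2). For a simple ordered 2-path (v1,v2,v3) of G, let b_d(G,(v1,v2,v3)) denote the number of simple ordered 2-paths (u,v,w) of G with {u,v,w} ∩ {v1,v2,v3} = ∅ such that v1u, v2v and v3w are non-edges. Then for every simple ordered 2-path (v1,v2,v3) of G, b_d(G,(v1,v2,v3)) ≥ M_2 − 4·m2·(2Δ−3) − 3Δ³ + 2Δ² + 3Δ − 2. -/

import Mathlib

open Finset

private lemma chain2 {α V W : Type*} [DecidableEq V] [DecidableEq W] (S : Finset α)
    (q : α → V) (r : α → W) (B : Finset V)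
    (g : V → Finset W) (k : ℕ)
    (hinj : ∀ a ∈ S, ∀ b ∈ S, q a = q b → r a = r b → a = b)
    (hq : ∀ a ∈ S, q a ∈ B) (hr : ∀ a ∈ S, r a ∈ g (q a))
    (hg : ∀ b ∈ B, (g b).card ≤ k) : S.card ≤ B.card * k := by
  classical
  rw [Finset.card_eq_sum_card_fiberwise hq]
  have h : ∀ b ∈ B, (S.filter fun a => q a = b).card ≤ k := by
    intro b hb
    refine le_trans ?_ (hg b hb)
    apply Finset.card_le_card_of_injOn r
    · intro a ha
      rw [Finset.mem_coe, Finset.mem_filter] at ha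
      have h2 := hr a ha.1
      rwa [ha.2] at h2
    · intro a ha a' ha' hr'
      simp only [Finset.coe_filter, Set.mem_setOf_eq] at ha ha'
      exact hinj a ha.1 a' ha'.1 (ha.2.trans ha'.2.symm) hr'
  calc ∑ b ∈ B, (S.filter fun a => q a = b).card ≤ ∑ _b ∈ B, k := Finset.sum_le_sum h
    _ = B.card * k := by rw [Finset.sum_const, smul_eq_mul]

private lemma chain3 {α V : Type*} [DecidableEq V] (S : Finset α) (p q r : α → V) (B : Finset V)
    (f : V → Finset V) (g : V → V → Finset V) (k1 k2 : ℕ)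
    (hinj : ∀ a ∈ S, ∀ b ∈ S, p a = p b → q a = q b → r a = r b → a = b)
    (hp : ∀ a ∈ S, p a ∈ B) (hq : ∀ a ∈ S, q a ∈ f (p a)) (hr : ∀ a ∈ S, r a ∈ g (p a) (q a))
    (hf : ∀ b ∈ B, (f b).card ≤ k1) (hg : ∀ b ∈ B, ∀ c ∈ f b, (g b c).card ≤ k2) :
    S.card ≤ B.card * (k1 * k2) := by
  classical
  apply chain2 S p (fun a => (q a, r a)) B
    (fun b => (f b).biUnion fun c => (g b c).image fun x => (c, x)) (k1 * k2)
  · intro a ha b hb h1 h2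
    exact hinj a ha b hb h1 (congrArg Prod.fst h2) (congrArg Prod.snd h2)
  · exact hp
  · intro a ha
    exact Finset.mem_biUnion.2 ⟨q a, hq a ha, Finset.mem_image.2 ⟨r a, hr a ha, rfl⟩⟩
  · intro b hb
    refine (Finset.card_biUnion_le).trans ?_
    calc ∑ c ∈ f b, ((g b c).image fun x => (c, x)).card
        ≤ ∑ c ∈ f b, k2 :=
          Finset.sum_le_sum fun c hc => (Finset.card_image_le).trans (hg b hb c hc)
      _ = (f b).card * k2 := by rw [Finset.sum_const, smul_eq_mul]
      _ ≤ k1 * k2 := Nat.mul_le_mul_right k2 (hf b hb)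

private lemma cast_md (m : ℕ) : ((m * (m - 1) : ℕ) : ℝ) = (m : ℝ) * ((m : ℝ) - 1) := by
  cases m with
  | zero => simp
  | succ k => push_cast [Nat.succ_sub_one]; ring

private lemma cast_sq (s : ℕ) : ((s * s - s : ℕ) : ℝ) = (s : ℝ) * (s : ℝ) - s := by
  cases s with
  | zero => simp
  | succ k =>
    have h : (k+1) ≤ (k+1) * (k+1) := Nat.le_mul_of_pos_left _ (Nat.succ_pos k)
    push_cast [Nat.cast_sub h]; ring

private lemma perv (s t d Δ : ℕ) (hd : d = s + 2 * t) (hdΔ : d ≤ Δ) (hΔ2 : 2 ≤ Δ) :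
    ((d * (d - 1) : ℕ) : ℝ) ≤ ((s * s - s : ℕ) : ℝ) + 2 * t * (2 * (Δ : ℝ) - 3) := by
  rw [cast_md, cast_sq]
  rcases Nat.eq_zero_or_pos t with ht | ht
  · subst ht; subst hd; push_cast; ring_nf; nlinarith []
  · have key : (s : ℝ) + t + 1 ≤ Δ := by exact_mod_cast (by omega : s + t + 1 ≤ Δ)
    have ht' : (1 : ℝ) ≤ t := by exact_mod_cast ht
    have hprod : 0 ≤ 4 * (t : ℝ) * ((Δ : ℝ) - 1 - s - t) :=
      mul_nonneg (by positivity) (by linarith)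
    have hdr : (d : ℝ) = s + 2 * t := by exact_mod_cast hd
    rw [hdr]; nlinarith [hprod]


theorem bd_path_lower (n : ℕ) (d : Fin n → ℕ) (mG : Fin n → Fin n → ℕ)
    (M M2 Δ m2 : ℕ)
    (hM : M = ∑ i, d i)
    (hM2 : M2 = ∑ i, d i * (d i - 1))
    (hΔ : Δ = Finset.univ.sup d)
    (hsymm : ∀ u v, mG u v = mG v u)
    (hdeg : ∀ v, (∑ u ∈ Finset.univ.filter (fun u => u ≠ v), mG v u)
        + 2 * mG v v = d v)
    (hloop : ∀ v, mG v v = 0)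
    (hmul : ∀ u v, u ≠ v → mG u v ≤ 2)
    (hm2 : 2 * m2 = Set.ncard {q : Fin n × Fin n | q.1 ≠ q.2 ∧ mG q.1 q.2 = 2})
    (v1 v2 v3 : Fin n)
    (hdist : v1 ≠ v2 ∧ v1 ≠ v3 ∧ v2 ≠ v3)
    (hpath : mG v1 v2 = 1 ∧ mG v2 v3 = 1)
    (bd1 : ℕ)
    (hbd1 : bd1 = Set.ncard {t : Fin n × Fin n × Fin n |
      t.1 ≠ t.2.1 ∧ t.1 ≠ t.2.2 ∧ t.2.1 ≠ t.2.2 ∧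
      mG t.1 t.2.1 = 1 ∧ mG t.2.1 t.2.2 = 1 ∧
      t.1 ≠ v1 ∧ t.1 ≠ v2 ∧ t.1 ≠ v3 ∧
      t.2.1 ≠ v1 ∧ t.2.1 ≠ v2 ∧ t.2.1 ≠ v3 ∧
      t.2.2 ≠ v1 ∧ t.2.2 ≠ v2 ∧ t.2.2 ≠ v3 ∧
      mG v1 t.1 = 0 ∧ mG v2 t.2.1 = 0 ∧ mG v3 t.2.2 = 0}) :
    (M2 : ℝ) - 4 * m2 * (2 * Δ - 3) - 3 * Δ ^ 3 + 2 * Δ ^ 2 + 3 * Δ - 2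
      ≤ (bd1 : ℝ) := by
  classical
  -- neighbourhoods
  set Ns : Fin n → Finset (Fin n) := fun v => univ.filter (fun u => mG v u = 1) with hNs
  set Nb : Fin n → Finset (Fin n) := fun v => univ.filter (fun u => mG v u ≠ 0) with hNb
  set Nd : Fin n → Finset (Fin n) := fun v => univ.filter (fun u => mG v u = 2) with hNd
  have memNs : ∀ v u, u ∈ Ns v ↔ mG v u = 1 := by intro v u; simp [hNs]
  have memNb : ∀ v u, u ∈ Nb v ↔ mG v u ≠ 0 := by intro v u; simp [hNb]
  have memNd : ∀ v u, u ∈ Nd v ↔ mG v u = 2 := by intro v u; simp [hNd]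
  have hd : ∀ v, d v ≤ Δ := fun v => hΔ ▸ Finset.le_sup (mem_univ v)
  have hsum0 : ∀ v, ∑ u, mG v u = d v := by
    intro v
    have h := hdeg v
    rw [hloop v, mul_zero, add_zero] at h
    rw [← h, ← Finset.sum_filter_add_sum_filter_not univ (fun u => u ≠ v) (fun u => mG v u)]
    have h2 : univ.filter (fun u => ¬ u ≠ v) = {v} := by ext u; simp
    rw [h2]
    simp [hloop v]
  have hs_le : ∀ v, (Ns v).card ≤ d v := by
    intro v
    rw [← hsum0 v]
    calc (Ns v).card = ∑ u ∈ Ns v, 1 := by simp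
      _ ≤ ∑ u ∈ Ns v, mG v u :=
        Finset.sum_le_sum (fun u hu => by rw [(memNs v u).1 hu])
      _ ≤ ∑ u, mG v u := Finset.sum_le_sum_of_subset (subset_univ _)
  have hb_le : ∀ v, (Nb v).card ≤ d v := by
    intro v
    rw [← hsum0 v]
    calc (Nb v).card = ∑ u ∈ Nb v, 1 := by simp
      _ ≤ ∑ u ∈ Nb v, mG v u :=
        Finset.sum_le_sum (fun u hu => Nat.one_le_iff_ne_zero.2 ((memNb v u).1 hu))
      _ ≤ ∑ u, mG v u := Finset.sum_le_sum_of_subset (subset_univ _)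
  have hsΔ : ∀ v, (Ns v).card ≤ Δ := fun v => (hs_le v).trans (hd v)
  have hbΔ : ∀ v, (Nb v).card ≤ Δ := fun v => (hb_le v).trans (hd v)
  have hm21 : mG v2 v1 = 1 := by rw [hsymm]; exact hpath.1
  have hm23 : mG v2 v3 = 1 := hpath.2
  have hm32 : mG v3 v2 = 1 := by rw [hsymm]; exact hpath.2
  have hsubNs2 : ({v1, v3} : Finset (Fin n)) ⊆ Ns v2 := by
    intro x hx
    rcases Finset.mem_insert.1 hx with h | h
    · rw [h]; exact (memNs v2 v1).2 hm21
    · rw [Finset.mem_singleton.1 h]; exact (memNs v2 v3).2 hm23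
  have hΔ2 : 2 ≤ Δ := by
    have h2 : ({v1, v3} : Finset (Fin n)).card = 2 := Finset.card_pair hdist.2.1
    have := Finset.card_le_card hsubNs2
    rw [h2] at this
    exact this.trans (hsΔ v2)
  -- double-neighbour degree bound
  have hNsd2 : ∀ x y, mG x y = 2 → (Ns y).card + 2 ≤ d y := by
    intro x y hxy
    have hyx : mG y x = 2 := by rw [hsymm]; exact hxy
    have hxny : x ∉ Ns y := by rw [memNs]; omega
    have hins : insert x (Ns y) ⊆ univ := subset_univ _
    have hsum : ∑ u ∈ insert x (Ns y), mG y u = 2 + (Ns y).card := by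
      rw [Finset.sum_insert hxny, hyx]
      congr 1
      calc ∑ u ∈ Ns y, mG y u = ∑ u ∈ Ns y, 1 :=
            Finset.sum_congr rfl (fun u hu => (memNs y u).1 hu)
        _ = (Ns y).card := by simp
    have := Finset.sum_le_sum_of_subset (f := fun u => mG y u) hins
    rw [hsum, hsum0 y] at this
    omega
  have hNse : ∀ x y, mG x y ≠ 0 → ((Ns y).erase x).card ≤ Δ - 1 := by
    intro x y hxy
    have hxy2 : x ≠ y := by intro h; rw [h, hloop] at hxy; exact hxy rfl
    have h2 : mG x y ≤ 2 := hmul x y hxy2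
    interval_cases h : mG x y
    · omega
    · have hmem : x ∈ Ns y := (memNs y x).2 (by rw [hsymm]; exact h)
      rw [Finset.card_erase_of_mem hmem]
      exact Nat.sub_le_sub_right (hsΔ y) 1
    · have := hNsd2 x y h
      have h3 := (Finset.card_erase_le (s := Ns y) (a := x))
      have := hd y
      omega
  -- path sets
  set p3 : Fin n × Fin n × Fin n → Prop := fun t =>
    t.1 ≠ t.2.1 ∧ t.1 ≠ t.2.2 ∧ t.2.1 ≠ t.2.2 ∧ mG t.1 t.2.1 = 1 ∧ mG t.2.1 t.2.2 = 1 with hp3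
  set ex : Fin n × Fin n × Fin n → Prop := fun t =>
    t.1 ≠ v1 ∧ t.1 ≠ v2 ∧ t.1 ≠ v3 ∧ t.2.1 ≠ v1 ∧ t.2.1 ≠ v2 ∧ t.2.1 ≠ v3 ∧
    t.2.2 ≠ v1 ∧ t.2.2 ≠ v2 ∧ t.2.2 ≠ v3 ∧
    mG v1 t.1 = 0 ∧ mG v2 t.2.1 = 0 ∧ mG v3 t.2.2 = 0 with hex
  set P : Finset (Fin n × Fin n × Fin n) := univ.filter p3 with hP
  set Good : Finset (Fin n × Fin n × Fin n) := P.filter ex with hGoodDef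
  set Bad : Finset (Fin n × Fin n × Fin n) := P.filter (fun t => ¬ ex t) with hBadDef
  have hbd1' : bd1 = Good.card := by
    rw [hbd1]
    have hset : {t : Fin n × Fin n × Fin n |
      t.1 ≠ t.2.1 ∧ t.1 ≠ t.2.2 ∧ t.2.1 ≠ t.2.2 ∧
      mG t.1 t.2.1 = 1 ∧ mG t.2.1 t.2.2 = 1 ∧
      t.1 ≠ v1 ∧ t.1 ≠ v2 ∧ t.1 ≠ v3 ∧
      t.2.1 ≠ v1 ∧ t.2.1 ≠ v2 ∧ t.2.1 ≠ v3 ∧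
      t.2.2 ≠ v1 ∧ t.2.2 ≠ v2 ∧ t.2.2 ≠ v3 ∧
      mG v1 t.1 = 0 ∧ mG v2 t.2.1 = 0 ∧ mG v3 t.2.2 = 0} = ↑Good := by
      ext t
      simp only [hGoodDef, hP, hp3, hex, Finset.coe_filter, Finset.mem_filter,
        Finset.mem_univ, true_and, Set.mem_setOf_eq]
      tauto
    rw [hset, Set.ncard_coe_finset]
  have hGB : Good.card + Bad.card = P.card := by
    rw [hGoodDef, hBadDef]
    exact Finset.card_filter_add_card_filter_not (p := ex)
  have hdecomp : ∀ v, d v = (Ns v).card + 2 * (Nd v).card := by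
    intro v
    rw [← hsum0 v]
    have hpt : ∀ u ∈ univ, mG v u =
        (if mG v u = 1 then 1 else 0) + 2 * (if mG v u = 2 then 1 else 0) := by
      intro u _
      by_cases h : u = v
      · rw [h, hloop]; simp
      · have h2 : mG v u ≤ 2 := hmul v u (fun he => h he.symm)
        split_ifs <;> omega
    rw [Finset.sum_congr rfl hpt, Finset.sum_add_distrib]
    congr 1
    · rw [← Finset.card_filter]
    · rw [← Finset.mul_sum, ← Finset.card_filter]
  have hQ : 2 * m2 = ∑ v, (Nd v).card := by
    rw [hm2]
    have hco : {q : Fin n × Fin n | q.1 ≠ q.2 ∧ mG q.1 q.2 = 2} =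
        ↑(univ.filter (fun q : Fin n × Fin n => q.1 ≠ q.2 ∧ mG q.1 q.2 = 2)) := by
      ext q; simp
    rw [hco, Set.ncard_coe_finset]
    rw [Finset.card_eq_sum_card_fiberwise (f := fun q => q.1) (t := univ)
      (fun q _ => mem_univ _)]
    apply Finset.sum_congr rfl
    intro v _
    apply Finset.card_bij (fun q _ => q.2)
    · intro q hq
      simp only [Finset.mem_filter, Finset.mem_univ, true_and] at hq
      rw [memNd, ← hq.2]
      exact hq.1.2
    · intro q hq q' hq' h
      simp only [Finset.mem_filter, Finset.mem_univ, true_and] at hq hq'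
      exact Prod.ext (hq.2.trans hq'.2.symm) h
    · intro u hu
      rw [memNd] at hu
      refine ⟨(v, u), ?_, rfl⟩
      simp only [Finset.mem_filter, Finset.mem_univ, true_and]
      have : v ≠ u := by intro h; rw [h, hloop] at hu; omega
      exact ⟨⟨this, hu⟩, trivial⟩
  have hPlow : ∑ v, ((Ns v).card * (Ns v).card - (Ns v).card) ≤ P.card := by
    rw [Finset.card_eq_sum_card_fiberwise (f := fun t => t.2.1) (t := univ)
      (fun t _ => mem_univ _)]
    apply Finset.sum_le_sum
    intro v _
    rw [← Finset.offDiag_card]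
    apply Finset.card_le_card_of_injOn (fun p => (p.1, v, p.2))
    · intro a ha
      rw [Finset.mem_coe, Finset.mem_offDiag] at ha
      rw [Finset.mem_coe]
      have h1 : mG v a.1 = 1 := (memNs _ _).1 ha.1
      have h2 : mG v a.2 = 1 := (memNs _ _).1 ha.2.1
      have hn1 : a.1 ≠ v := by intro h; rw [h, hloop] at h1; omega
      have hn2 : v ≠ a.2 := by intro h; rw [← h, hloop] at h2; omega
      refine Finset.mem_filter.2 ⟨?_, rfl⟩
      rw [hP, Finset.mem_filter]
      refine ⟨mem_univ _, ?_⟩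
      show p3 (a.1, v, a.2)
      rw [hp3]
      exact ⟨hn1, ha.2.2, hn2, by rw [hsymm]; exact h1, h2⟩
    · intro a _ b _ h
      simp only [Prod.mk.injEq] at h
      exact Prod.ext h.1 h.2.2
  have hM2R : (M2 : ℝ) ≤ (P.card : ℝ) + 4 * m2 * (2 * (Δ:ℝ) - 3) := by
    have step : ∀ v ∈ univ, ((d v * (d v - 1) : ℕ) : ℝ) ≤
        (((Ns v).card * (Ns v).card - (Ns v).card : ℕ) : ℝ)
          + 2 * ((Nd v).card : ℝ) * (2 * (Δ:ℝ) - 3) :=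
      fun v _ => perv _ _ _ _ (hdecomp v) (hd v) hΔ2
    have h1 : (M2 : ℝ) = ∑ v, ((d v * (d v - 1) : ℕ) : ℝ) := by
      rw [hM2]; push_cast; rfl
    have h2 : (M2 : ℝ) ≤ ∑ v, ((((Ns v).card * (Ns v).card - (Ns v).card : ℕ) : ℝ)
        + 2 * ((Nd v).card : ℝ) * (2 * (Δ:ℝ) - 3)) := by
      rw [h1]; exact Finset.sum_le_sum step
    rw [Finset.sum_add_distrib] at h2
    have h3 : ∑ v, (2 * ((Nd v).card : ℝ) * (2 * (Δ:ℝ) - 3))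
        = 4 * m2 * (2 * (Δ:ℝ) - 3) := by
      rw [← Finset.sum_mul, ← Finset.mul_sum]
      have : ((2 * m2 : ℕ) : ℝ) = ∑ v, ((Nd v).card : ℝ) := by
        rw [hQ]; push_cast; rfl
      push_cast at this
      rw [← this]; ring
    rw [h3] at h2
    have h4 : ∑ v, ((((Ns v).card * (Ns v).card - (Ns v).card : ℕ)) : ℝ) ≤ (P.card : ℝ) := by
      rw [← Nat.cast_sum]
      exact_mod_cast hPlow
    linarith
  -- decompose Bad
  have hBadP : ∀ t ∈ Bad, t.1 ≠ t.2.1 ∧ t.1 ≠ t.2.2 ∧ t.2.1 ≠ t.2.2 ∧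
      mG t.1 t.2.1 = 1 ∧ mG t.2.1 t.2.2 = 1 := by
    intro t ht
    have h := (Finset.mem_filter.1 ht).1
    rw [hP, Finset.mem_filter] at h
    have h2 := h.2
    rw [hp3] at h2
    exact h2
  have trext : ∀ (a b : Fin n × Fin n × Fin n),
      a.1 = b.1 → a.2.1 = b.2.1 → a.2.2 = b.2.2 → a = b := by
    rintro ⟨a1, a2, a3⟩ ⟨b1, b2, b3⟩ h1 h2 h3
    simp only [Prod.mk.injEq]
    exact ⟨h1, h2, h3⟩
  set UB : Fin n × Fin n × Fin n → Prop :=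
    fun t => t.1 = v1 ∨ t.1 = v3 ∨ mG v1 t.1 ≠ 0 with hUB
  set VB : Fin n × Fin n × Fin n → Prop :=
    fun t => t.2.1 = v1 ∨ t.2.1 = v2 ∨ t.2.1 = v3 ∨ mG v2 t.2.1 ≠ 0 with hVB
  have hUBe : ∀ t, ¬ UB t → t.1 ≠ v1 ∧ t.1 ≠ v2 ∧ t.1 ≠ v3 ∧ mG v1 t.1 = 0 := by
    intro t h
    simp only [hUB] at h
    push_neg at h
    refine ⟨h.1, ?_, h.2.1, h.2.2⟩
    intro he
    rw [he, hpath.1] at h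
    omega
  have hVBe : ∀ t, ¬ VB t → t.2.1 ≠ v1 ∧ t.2.1 ≠ v2 ∧ t.2.1 ≠ v3 ∧ mG v2 t.2.1 = 0 := by
    intro t h
    simp only [hVB] at h
    push_neg at h
    exact ⟨h.1, h.2.1, h.2.2.1, h.2.2.2⟩
  set A1 : Finset (Fin n × Fin n × Fin n) := Bad.filter (fun t => t.1 = v1) with hA1
  set A2 : Finset (Fin n × Fin n × Fin n) := Bad.filter (fun t => t.1 = v3) with hA2
  set A3 : Finset (Fin n × Fin n × Fin n) := Bad.filter (fun t => mG v1 t.1 ≠ 0) with hA3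
  set B1 : Finset (Fin n × Fin n × Fin n) :=
    Bad.filter (fun t => ¬ UB t ∧ t.2.1 = v2) with hB1
  set B2 : Finset (Fin n × Fin n × Fin n) :=
    Bad.filter (fun t => ¬ UB t ∧ t.2.1 = v3) with hB2
  set B4 : Finset (Fin n × Fin n × Fin n) :=
    Bad.filter (fun t => ¬ UB t ∧ t.2.1 ≠ v1 ∧ t.2.1 ≠ v3 ∧ mG v2 t.2.1 ≠ 0) with hB4
  set C1 : Finset (Fin n × Fin n × Fin n) :=
    Bad.filter (fun t => ¬ UB t ∧ ¬ VB t ∧ t.2.2 = v1) with hC1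
  set C2 : Finset (Fin n × Fin n × Fin n) :=
    Bad.filter (fun t => ¬ UB t ∧ ¬ VB t ∧ t.2.2 = v3) with hC2
  set C4 : Finset (Fin n × Fin n × Fin n) :=
    Bad.filter (fun t => ¬ UB t ∧ ¬ VB t ∧ t.2.2 ≠ v1 ∧ t.2.2 ≠ v2 ∧ t.2.2 ≠ v3 ∧
      mG v3 t.2.2 ≠ 0) with hC4
  have hcover : Bad ⊆ A1 ∪ A2 ∪ A3 ∪ B1 ∪ B2 ∪ B4 ∪ C1 ∪ C2 ∪ C4 := by
    intro t ht
    have hp := hBadP t ht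
    have hnex := (Finset.mem_filter.1 ht).2
    have goal9 : t ∈ A1 ∨ t ∈ A2 ∨ t ∈ A3 ∨ t ∈ B1 ∨ t ∈ B2 ∨ t ∈ B4 ∨
        t ∈ C1 ∨ t ∈ C2 ∨ t ∈ C4 := by
      by_cases h1 : t.1 = v1
      · exact Or.inl (Finset.mem_filter.2 ⟨ht, h1⟩)
      by_cases h3 : t.1 = v3
      · exact Or.inr (Or.inl (Finset.mem_filter.2 ⟨ht, h3⟩))
      by_cases h0 : mG v1 t.1 ≠ 0
      · exact Or.inr (Or.inr (Or.inl (Finset.mem_filter.2 ⟨ht, h0⟩)))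
      have hnUB : ¬ UB t := by
        simp only [hUB]
        push_neg
        exact ⟨h1, h3, not_not.1 h0⟩
      by_cases hv2' : t.2.1 = v2
      · exact Or.inr (Or.inr (Or.inr (Or.inl (Finset.mem_filter.2 ⟨ht, hnUB, hv2'⟩))))
      by_cases hv3' : t.2.1 = v3
      · exact Or.inr (Or.inr (Or.inr (Or.inr (Or.inl
          (Finset.mem_filter.2 ⟨ht, hnUB, hv3'⟩)))))
      by_cases hv1' : t.2.1 = v1
      · exfalso
        have h12 := hp.2.2.2.1
        rw [hv1', hsymm] at h12
        have h0' := not_not.1 h0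
        omega
      by_cases hv0 : mG v2 t.2.1 ≠ 0
      · exact Or.inr (Or.inr (Or.inr (Or.inr (Or.inr (Or.inl
          (Finset.mem_filter.2 ⟨ht, hnUB, hv1', hv3', hv0⟩))))))
      have hnVB : ¬ VB t := by
        simp only [hVB]
        push_neg
        exact ⟨hv1', hv2', hv3', not_not.1 hv0⟩
      by_cases hw1 : t.2.2 = v1
      · exact Or.inr (Or.inr (Or.inr (Or.inr (Or.inr (Or.inr (Or.inl
          (Finset.mem_filter.2 ⟨ht, hnUB, hnVB, hw1⟩)))))))
      by_cases hw3 : t.2.2 = v3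
      · exact Or.inr (Or.inr (Or.inr (Or.inr (Or.inr (Or.inr (Or.inr (Or.inl
          (Finset.mem_filter.2 ⟨ht, hnUB, hnVB, hw3⟩))))))))
      by_cases hw2 : t.2.2 = v2
      · exfalso
        have h23 := hp.2.2.2.2
        rw [hw2, hsymm] at h23
        have := not_not.1 hv0
        omega
      by_cases hw0 : mG v3 t.2.2 ≠ 0
      · exact Or.inr (Or.inr (Or.inr (Or.inr (Or.inr (Or.inr (Or.inr (Or.inr
          (Finset.mem_filter.2 ⟨ht, hnUB, hnVB, hw1, hw2, hw3, hw0⟩))))))))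
      exfalso
      apply hnex
      simp only [hex]
      exact ⟨h1, (hUBe t hnUB).2.1, h3, hv1', hv2', hv3', hw1, hw2, hw3,
        not_not.1 h0, not_not.1 hv0, not_not.1 hw0⟩
    rcases goal9 with h | h | h | h | h | h | h | h | h
    · exact Finset.mem_union_left _ (Finset.mem_union_left _ (Finset.mem_union_left _ (Finset.mem_union_left _ (Finset.mem_union_left _ (Finset.mem_union_left _ (Finset.mem_union_left _ (Finset.mem_union_left _ h)))))))
    · exact Finset.mem_union_left _ (Finset.mem_union_left _ (Finset.mem_union_left _ (Finset.mem_union_left _ (Finset.mem_union_left _ (Finset.mem_union_left _ (Finset.mem_union_left _ (Finset.mem_union_right _ h)))))))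
    · exact Finset.mem_union_left _ (Finset.mem_union_left _ (Finset.mem_union_left _ (Finset.mem_union_left _ (Finset.mem_union_left _ (Finset.mem_union_left _ (Finset.mem_union_right _ h))))))
    · exact Finset.mem_union_left _ (Finset.mem_union_left _ (Finset.mem_union_left _ (Finset.mem_union_left _ (Finset.mem_union_left _ (Finset.mem_union_right _ h)))))
    · exact Finset.mem_union_left _ (Finset.mem_union_left _ (Finset.mem_union_left _ (Finset.mem_union_left _ (Finset.mem_union_right _ h))))
    · exact Finset.mem_union_left _ (Finset.mem_union_left _ (Finset.mem_union_left _ (Finset.mem_union_right _ h)))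
    · exact Finset.mem_union_left _ (Finset.mem_union_left _ (Finset.mem_union_right _ h))
    · exact Finset.mem_union_left _ (Finset.mem_union_right _ h)
    · exact Finset.mem_union_right _ h
  have hA1b : A1.card ≤ Δ * (Δ - 1) := by
    have h := chain3 A1 (fun t => t.1) (fun t => t.2.1) (fun t => t.2.2) {v1}
      Ns (fun b c => (Ns c).erase b) Δ (Δ - 1)
      (fun a _ b _ h1 h2 h3 => trext a b h1 h2 h3)
      (fun t ht => Finset.mem_singleton.2 (Finset.mem_filter.1 ht).2)
      (fun t ht => (memNs _ _).2 (hBadP t (Finset.mem_filter.1 ht).1).2.2.2.1)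
      (fun t ht => Finset.mem_erase.2 ⟨Ne.symm (hBadP t (Finset.mem_filter.1 ht).1).2.1,
        (memNs _ _).2 (hBadP t (Finset.mem_filter.1 ht).1).2.2.2.2⟩)
      (fun b _ => hsΔ b)
      (fun b _ c hc => hNse b c (by have := (memNs b c).1 hc; omega))
    simpa using h
  have hA2b : A2.card ≤ Δ * (Δ - 1) := by
    have h := chain3 A2 (fun t => t.1) (fun t => t.2.1) (fun t => t.2.2) {v3}
      Ns (fun b c => (Ns c).erase b) Δ (Δ - 1)
      (fun a _ b _ h1 h2 h3 => trext a b h1 h2 h3)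
      (fun t ht => Finset.mem_singleton.2 (Finset.mem_filter.1 ht).2)
      (fun t ht => (memNs _ _).2 (hBadP t (Finset.mem_filter.1 ht).1).2.2.2.1)
      (fun t ht => Finset.mem_erase.2 ⟨Ne.symm (hBadP t (Finset.mem_filter.1 ht).1).2.1,
        (memNs _ _).2 (hBadP t (Finset.mem_filter.1 ht).1).2.2.2.2⟩)
      (fun b _ => hsΔ b)
      (fun b _ c hc => hNse b c (by have := (memNs b c).1 hc; omega))
    simpa using h
  have hA3b : A3.card ≤ Δ * (Δ * (Δ - 1)) := by
    have h := chain3 A3 (fun t => t.1) (fun t => t.2.1) (fun t => t.2.2) (Nb v1)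
      Ns (fun b c => (Ns c).erase b) Δ (Δ - 1)
      (fun a _ b _ h1 h2 h3 => trext a b h1 h2 h3)
      (fun t ht => (memNb _ _).2 (Finset.mem_filter.1 ht).2)
      (fun t ht => (memNs _ _).2 (hBadP t (Finset.mem_filter.1 ht).1).2.2.2.1)
      (fun t ht => Finset.mem_erase.2 ⟨Ne.symm (hBadP t (Finset.mem_filter.1 ht).1).2.1,
        (memNs _ _).2 (hBadP t (Finset.mem_filter.1 ht).1).2.2.2.2⟩)
      (fun b _ => hsΔ b)
      (fun b _ c hc => hNse b c (by have := (memNs b c).1 hc; omega))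
    exact h.trans (Nat.mul_le_mul_right _ (hbΔ v1))
  have hB1b : B1.card ≤ (Δ - 2) * (Δ - 1) := by
    have h := chain3 B1 (fun t => t.2.1) (fun t => t.1) (fun t => t.2.2) {v2}
      (fun _ => Ns v2 \ {v1, v3}) (fun b c => (Ns b).erase c) (Δ - 2) (Δ - 1)
      (fun a _ b _ h1 h2 h3 => trext a b h2 h1 h3)
      (fun t ht => Finset.mem_singleton.2 (Finset.mem_filter.1 ht).2.2)
      (by
        intro t ht
        have hm := Finset.mem_filter.1 ht
        have hp' := hBadP t hm.1
        have he := hUBe t hm.2.1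
        refine Finset.mem_sdiff.2 ⟨(memNs _ _).2 ?_, ?_⟩
        · have h12 := hp'.2.2.2.1
          rw [hm.2.2] at h12
          rw [hsymm]
          exact h12
        · simp only [Finset.mem_insert, Finset.mem_singleton]
          push_neg
          exact ⟨he.1, he.2.2.1⟩)
      (fun t ht => Finset.mem_erase.2 ⟨Ne.symm (hBadP t (Finset.mem_filter.1 ht).1).2.1,
        (memNs _ _).2 (hBadP t (Finset.mem_filter.1 ht).1).2.2.2.2⟩)
      (by
        intro b _
        rw [Finset.card_sdiff_of_subset hsubNs2, Finset.card_pair hdist.2.1]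
        exact Nat.sub_le_sub_right (hsΔ v2) 2)
      (by
        intro b hb c hc
        rw [Finset.mem_singleton] at hb
        rw [hb]
        have h1 : mG v2 c = 1 := (memNs v2 c).1 (Finset.mem_sdiff.1 hc).1
        refine hNse c v2 ?_
        rw [hsymm]
        omega)
    simpa using h
  have hB2b : B2.card ≤ (Δ - 1) * (Δ - 1) := by
    have h := chain3 B2 (fun t => t.2.1) (fun t => t.1) (fun t => t.2.2) {v3}
      (fun _ => (Ns v3).erase v2) (fun b c => (Ns b).erase c) (Δ - 1) (Δ - 1)
      (fun a _ b _ h1 h2 h3 => trext a b h2 h1 h3)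
      (fun t ht => Finset.mem_singleton.2 (Finset.mem_filter.1 ht).2.2)
      (by
        intro t ht
        have hm := Finset.mem_filter.1 ht
        have hp' := hBadP t hm.1
        have he := hUBe t hm.2.1
        refine Finset.mem_erase.2 ⟨he.2.1, (memNs _ _).2 ?_⟩
        have h12 := hp'.2.2.2.1
        rw [hm.2.2] at h12
        rw [hsymm]
        exact h12)
      (fun t ht => Finset.mem_erase.2 ⟨Ne.symm (hBadP t (Finset.mem_filter.1 ht).1).2.1,
        (memNs _ _).2 (hBadP t (Finset.mem_filter.1 ht).1).2.2.2.2⟩)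
      (fun b _ => hNse v2 v3 (by omega))
      (by
        intro b hb c hc
        rw [Finset.mem_singleton] at hb
        rw [hb]
        have h1 : mG v3 c = 1 := (memNs v3 c).1 (Finset.mem_erase.1 hc).2
        refine hNse c v3 ?_
        rw [hsymm]
        omega)
    simpa using h
  have hsubNb2 : ({v1, v3} : Finset (Fin n)) ⊆ Nb v2 := by
    intro x hx
    rcases Finset.mem_insert.1 hx with h | h
    · rw [h]; exact (memNb v2 v1).2 (by omega)
    · rw [Finset.mem_singleton.1 h]; exact (memNb v2 v3).2 (by omega)
  have hB4b : B4.card ≤ (Δ - 2) * ((Δ - 1) * (Δ - 1)) := by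
    have h := chain3 B4 (fun t => t.2.1) (fun t => t.1) (fun t => t.2.2) (Nb v2 \ {v1, v3})
      (fun b => (Ns b).erase v2) (fun b c => (Ns b).erase c) (Δ - 1) (Δ - 1)
      (fun a _ b _ h1 h2 h3 => trext a b h2 h1 h3)
      (by
        intro t ht
        have hm := Finset.mem_filter.1 ht
        refine Finset.mem_sdiff.2 ⟨(memNb _ _).2 hm.2.2.2.2, ?_⟩
        simp only [Finset.mem_insert, Finset.mem_singleton]
        push_neg
        exact ⟨hm.2.2.1, hm.2.2.2.1⟩)
      (by
        intro t ht
        have hm := Finset.mem_filter.1 ht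
        have hp' := hBadP t hm.1
        have he := hUBe t hm.2.1
        refine Finset.mem_erase.2 ⟨he.2.1, (memNs _ _).2 ?_⟩
        rw [hsymm]
        exact hp'.2.2.2.1)
      (fun t ht => Finset.mem_erase.2 ⟨Ne.symm (hBadP t (Finset.mem_filter.1 ht).1).2.1,
        (memNs _ _).2 (hBadP t (Finset.mem_filter.1 ht).1).2.2.2.2⟩)
      (fun b hb => hNse v2 b ((memNb v2 b).1 (Finset.mem_sdiff.1 hb).1))
      (by
        intro b hb c hc
        have h1 : mG b c = 1 := (memNs b c).1 (Finset.mem_erase.1 hc).2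
        refine hNse c b ?_
        rw [hsymm]
        omega)
    refine h.trans (Nat.mul_le_mul_right _ ?_)
    rw [Finset.card_sdiff_of_subset hsubNb2, Finset.card_pair hdist.2.1]
    exact Nat.sub_le_sub_right (hbΔ v2) 2
  have hC1b : C1.card ≤ (Δ - 1) * (Δ - 1) := by
    have h := chain3 C1 (fun t => t.2.2) (fun t => t.2.1) (fun t => t.1) {v1}
      (fun _ => (Ns v1).erase v2) (fun b c => (Ns c).erase b) (Δ - 1) (Δ - 1)
      (fun a _ b _ h1 h2 h3 => trext a b h3 h2 h1)
      (fun t ht => Finset.mem_singleton.2 (Finset.mem_filter.1 ht).2.2.2)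
      (by
        intro t ht
        have hm := Finset.mem_filter.1 ht
        have hp' := hBadP t hm.1
        have he := hVBe t hm.2.2.1
        refine Finset.mem_erase.2 ⟨he.2.1, (memNs _ _).2 ?_⟩
        have h23 := hp'.2.2.2.2
        rw [hm.2.2.2] at h23
        rw [hsymm]
        exact h23)
      (by
        intro t ht
        have hp' := hBadP t (Finset.mem_filter.1 ht).1
        exact Finset.mem_erase.2 ⟨hp'.2.1, (memNs _ _).2 (by rw [hsymm]; exact hp'.2.2.2.1)⟩)
      (fun b _ => hNse v2 v1 (by omega))
      (by
        intro b hb c hc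
        rw [Finset.mem_singleton] at hb
        rw [hb]
        have h1 : mG v1 c = 1 := (memNs v1 c).1 (Finset.mem_erase.1 hc).2
        exact hNse v1 c (by omega))
    simpa using h
  have hC2b : C2.card ≤ (Δ - 1) * (Δ - 1) := by
    have h := chain3 C2 (fun t => t.2.2) (fun t => t.2.1) (fun t => t.1) {v3}
      (fun _ => (Ns v3).erase v2) (fun b c => (Ns c).erase b) (Δ - 1) (Δ - 1)
      (fun a _ b _ h1 h2 h3 => trext a b h3 h2 h1)
      (fun t ht => Finset.mem_singleton.2 (Finset.mem_filter.1 ht).2.2.2)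
      (by
        intro t ht
        have hm := Finset.mem_filter.1 ht
        have hp' := hBadP t hm.1
        have he := hVBe t hm.2.2.1
        refine Finset.mem_erase.2 ⟨he.2.1, (memNs _ _).2 ?_⟩
        have h23 := hp'.2.2.2.2
        rw [hm.2.2.2] at h23
        rw [hsymm]
        exact h23)
      (by
        intro t ht
        have hp' := hBadP t (Finset.mem_filter.1 ht).1
        exact Finset.mem_erase.2 ⟨hp'.2.1, (memNs _ _).2 (by rw [hsymm]; exact hp'.2.2.2.1)⟩)
      (fun b _ => hNse v2 v3 (by omega))
      (by
        intro b hb c hc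
        rw [Finset.mem_singleton] at hb
        rw [hb]
        have h1 : mG v3 c = 1 := (memNs v3 c).1 (Finset.mem_erase.1 hc).2
        exact hNse v3 c (by omega))
    simpa using h
  have hC4b : C4.card ≤ (Δ - 1) * ((Δ - 1) * (Δ - 1)) := by
    have h := chain3 C4 (fun t => t.2.2) (fun t => t.2.1) (fun t => t.1) ((Nb v3).erase v2)
      (fun b => (Ns b).erase v3) (fun b c => (Ns c).erase b) (Δ - 1) (Δ - 1)
      (fun a _ b _ h1 h2 h3 => trext a b h3 h2 h1)
      (by
        intro t ht
        have hm := Finset.mem_filter.1 ht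
        exact Finset.mem_erase.2 ⟨hm.2.2.2.2.1, (memNb _ _).2 hm.2.2.2.2.2.2⟩)
      (by
        intro t ht
        have hm := Finset.mem_filter.1 ht
        have hp' := hBadP t hm.1
        have he := hVBe t hm.2.2.1
        refine Finset.mem_erase.2 ⟨he.2.2.1, (memNs _ _).2 ?_⟩
        rw [hsymm]
        exact hp'.2.2.2.2)
      (by
        intro t ht
        have hp' := hBadP t (Finset.mem_filter.1 ht).1
        exact Finset.mem_erase.2 ⟨hp'.2.1, (memNs _ _).2 (by rw [hsymm]; exact hp'.2.2.2.1)⟩)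
      (fun b hb => hNse v3 b ((memNb v3 b).1 (Finset.mem_erase.1 hb).2))
      (by
        intro b hb c hc
        have h1 : mG b c = 1 := (memNs b c).1 (Finset.mem_erase.1 hc).2
        exact hNse b c (by omega))
    refine h.trans (Nat.mul_le_mul_right _ ?_)
    have hv2mem : v2 ∈ Nb v3 := (memNb v3 v2).2 (by omega)
    rw [Finset.card_erase_of_mem hv2mem]
    exact Nat.sub_le_sub_right (hbΔ v3) 1
  have u1 := Finset.card_union_le A1 A2
  have u2 := Finset.card_union_le (A1 ∪ A2) A3
  have u3 := Finset.card_union_le (A1 ∪ A2 ∪ A3) B1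
  have u4 := Finset.card_union_le (A1 ∪ A2 ∪ A3 ∪ B1) B2
  have u5 := Finset.card_union_le (A1 ∪ A2 ∪ A3 ∪ B1 ∪ B2) B4
  have u6 := Finset.card_union_le (A1 ∪ A2 ∪ A3 ∪ B1 ∪ B2 ∪ B4) C1
  have u7 := Finset.card_union_le (A1 ∪ A2 ∪ A3 ∪ B1 ∪ B2 ∪ B4 ∪ C1) C2
  have u8 := Finset.card_union_le (A1 ∪ A2 ∪ A3 ∪ B1 ∪ B2 ∪ B4 ∪ C1 ∪ C2) C4
  have hcovercard := Finset.card_le_card hcover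
  have hBadNat : Bad.card ≤ Δ * (Δ - 1) + Δ * (Δ - 1) + Δ * (Δ * (Δ - 1))
      + (Δ - 2) * (Δ - 1) + (Δ - 1) * (Δ - 1) + (Δ - 2) * ((Δ - 1) * (Δ - 1))
      + (Δ - 1) * (Δ - 1) + (Δ - 1) * (Δ - 1) + (Δ - 1) * ((Δ - 1) * (Δ - 1)) := by
    linarith [u1, u2, u3, u4, u5, u6, u7, u8, hcovercard, hA1b, hA2b, hA3b,
      hB1b, hB2b, hB4b, hC1b, hC2b, hC4b]
  have hBadR : (Bad.card : ℝ) ≤ 3 * (Δ:ℝ) ^ 3 - 2 * (Δ:ℝ) ^ 2 - 3 * (Δ:ℝ) + 2 := by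
    have h1 : (1:ℕ) ≤ Δ := by omega
    calc (Bad.card : ℝ) ≤ ((Δ * (Δ - 1) + Δ * (Δ - 1) + Δ * (Δ * (Δ - 1))
      + (Δ - 2) * (Δ - 1) + (Δ - 1) * (Δ - 1) + (Δ - 2) * ((Δ - 1) * (Δ - 1))
      + (Δ - 1) * (Δ - 1) + (Δ - 1) * (Δ - 1) + (Δ - 1) * ((Δ - 1) * (Δ - 1)) : ℕ) : ℝ) :=
        Nat.cast_le.2 hBadNat
    _ = 3 * (Δ:ℝ) ^ 3 - 2 * (Δ:ℝ) ^ 2 - 3 * (Δ:ℝ) + 2 := by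
        push_cast [Nat.cast_sub h1, Nat.cast_sub hΔ2]
        ring
  have hGBR : (bd1 : ℝ) + Bad.card = P.card := by
    rw [hbd1']
    exact_mod_cast hGB
  linarith [hM2R, hBadR, hGBR]
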